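/- Let p = (−1, 0) on the boundary of the unit disk 𝔻 ⊂ ℝ², and μ ≥ 0. Define u on 𝔻 by u(x₁, x₂) = μ(((x₁+1)² + x₂²)/(2(x₁+1)) − 1). Then u is convex on 𝔻 (its Hessian is positive semidefinite), u has boundary value −μ at p and boundary value 0 at every other point of ∂𝔻, and u restricted to any segment joining p to a point x ∈ ∂𝔻 is the affine function interpolating −μ at p and 0 at x. -/

import Mathlib

open Filter Set Metric

lemma keyf (a b A1 A2 B1 B2 : ℝ) (hA1 : 0 < A1) (hA2 : 0 < A2)
    (ha : 0 ≤ a) (hb : 0 ≤ b) (hab : a + b = 1) :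
    ((a*A1+b*A2)^2 + (a*B1+b*B2)^2)/(2*(a*A1+b*A2)) - 1 ≤
      a*((A1^2+B1^2)/(2*A1) - 1) + b*((A2^2+B2^2)/(2*A2) - 1) := by
  have hb' : b = 1 - a := by linarith
  subst hb'
  have hd : 0 < a*A1 + (1-a)*A2 := by
    rcases ha.lt_or_eq with h|h
    · nlinarith
    · rw [← h]; nlinarith
  rw [← sub_nonneg]
  have h : a*((A1^2+B1^2)/(2*A1) - 1) + (1-a)*((A2^2+B2^2)/(2*A2) - 1) -
      (((a*A1+(1-a)*A2)^2 + (a*B1+(1-a)*B2)^2)/(2*(a*A1+(1-a)*A2)) - 1) =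
      (a*(1-a)*(B1*A2 - B2*A1)^2)/(2*A1*A2*(a*A1+(1-a)*A2)) := by
    field_simp
    ring
  rw [h]
  have h1a : 0 ≤ 1 - a := by linarith
  positivity

lemma coord_sq (x : EuclideanSpace ℝ (Fin 2)) : ‖x‖^2 = (x 0)^2 + (x 1)^2 := by
  rw [EuclideanSpace.norm_eq, Real.sq_sqrt (by positivity)]
  simp [Fin.sum_univ_two, sq_abs]

lemma ball_sq {x : EuclideanSpace ℝ (Fin 2)} (hx : x ∈ ball (0 : EuclideanSpace ℝ (Fin 2)) 1) :
    (x 0)^2 + (x 1)^2 < 1 := by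
  rw [mem_ball_zero_iff] at hx
  have := coord_sq x
  nlinarith [norm_nonneg x]

lemma sphere_sq {x : EuclideanSpace ℝ (Fin 2)}
    (hx : x ∈ sphere (0 : EuclideanSpace ℝ (Fin 2)) 1) : (x 0)^2 + (x 1)^2 = 1 := by
  rw [mem_sphere_zero_iff_norm] at hx
  rw [← coord_sq, hx]; norm_num

lemma ball_pos {x : EuclideanSpace ℝ (Fin 2)} (hx : x ∈ ball (0 : EuclideanSpace ℝ (Fin 2)) 1) :
    0 < x 0 + 1 := by nlinarith [ball_sq hx]

lemma sphere_pos {x p : EuclideanSpace ℝ (Fin 2)} (hp0 : p 0 = -1) (hp1 : p 1 = 0)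
    (hx : x ∈ sphere (0 : EuclideanSpace ℝ (Fin 2)) 1) (hne : x ≠ p) : 0 < x 0 + 1 := by
  have h := sphere_sq hx
  rcases lt_or_eq_of_le (by nlinarith : -1 ≤ x 0) with h'|h'
  · linarith
  · exfalso
    apply hne
    have h1 : x 1 = 0 := by nlinarith
    ext i
    fin_cases i <;> simp [← h', h1, hp0, hp1]

/-- Let `p = (−1, 0) ∈ ∂𝔻` and `μ ≥ 0`.  The function
`u(x₁, x₂) = μ(((x₁+1)² + x₂²)/(2(x₁+1)) − 1)` is convex on the unit disk `𝔻`, has boundary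
value `−μ` at `p` (radial limit) and boundary value `0` at every other boundary point, and its
restriction to any chord from `p` to `x ∈ ∂𝔻` is the affine function interpolating `−μ` at `p`
and `0` at `x`. -/
theorem disk_barrier_function
    (μ : ℝ) (hμ : 0 ≤ μ)
    (p : EuclideanSpace ℝ (Fin 2)) (hp0 : p 0 = -1) (hp1 : p 1 = 0) :
    let u : EuclideanSpace ℝ (Fin 2) → ℝ := fun x =>
      μ * (((x 0 + 1) ^ 2 + (x 1) ^ 2) / (2 * (x 0 + 1)) - 1)
    ConvexOn ℝ (ball (0 : EuclideanSpace ℝ (Fin 2)) 1) u ∧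
    (∀ x₁ ∈ ball (0 : EuclideanSpace ℝ (Fin 2)) 1,
      Tendsto (fun s : ℝ => u ((1 - s) • p + s • x₁))
        (nhdsWithin 0 (Ioi 0)) (nhds (-μ))) ∧
    (∀ x₀ ∈ sphere (0 : EuclideanSpace ℝ (Fin 2)) 1, x₀ ≠ p →
      ∀ x₁ ∈ ball (0 : EuclideanSpace ℝ (Fin 2)) 1,
        Tendsto (fun s : ℝ => u ((1 - s) • x₀ + s • x₁))
          (nhdsWithin 0 (Ioi 0)) (nhds 0)) ∧
    (∀ x ∈ sphere (0 : EuclideanSpace ℝ (Fin 2)) 1, x ≠ p →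
      ∀ s ∈ Ioo (0 : ℝ) 1, u ((1 - s) • p + s • x) = -μ * (1 - s)) := by
  intro u
  refine ⟨?_, ?_, ?_, ?_⟩
  · -- convexity
    refine ⟨convex_ball _ _, fun x hx y hy a b ha hb hab => ?_⟩
    show μ * _ ≤ _
    simp only [PiLp.add_apply, PiLp.smul_apply, smul_eq_mul]
    have hx0 := ball_pos hx
    have hy0 := ball_pos hy
    have hid : a * x 0 + b * y 0 + 1 = a*(x 0 + 1) + b*(y 0 + 1) := by
      linear_combination -hab
    rw [hid]
    have key := keyf a b (x 0 + 1) (y 0 + 1) (x 1) (y 1) hx0 hy0 ha hb hab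
    calc μ * (((a*(x 0+1)+b*(y 0+1))^2 + (a*(x 1)+b*(y 1))^2) / (2*(a*(x 0+1)+b*(y 0+1))) - 1)
        ≤ μ * (a*(((x 0+1)^2+(x 1)^2)/(2*(x 0+1)) - 1) + b*(((y 0+1)^2+(y 1)^2)/(2*(y 0+1)) - 1)) :=
          mul_le_mul_of_nonneg_left key hμ
      _ = a * (μ * (((x 0+1)^2+(x 1)^2)/(2*(x 0+1)) - 1)) + b * (μ * (((y 0+1)^2+(y 1)^2)/(2*(y 0+1)) - 1)) := by
          ring
  · -- radial limit -μ at p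
    intro x₁ hx₁
    have hA : 0 < x₁ 0 + 1 := ball_pos hx₁
    set c : ℝ := ((x₁ 0 + 1)^2 + (x₁ 1)^2) / (2*(x₁ 0 + 1)) with hc
    have hg : Tendsto (fun s : ℝ => μ * (s * c - 1)) (nhdsWithin 0 (Ioi 0)) (nhds (-μ)) := by
      have hct : ContinuousAt (fun s : ℝ => μ * (s * c - 1)) 0 := by fun_prop
      have h2 := hct.tendsto.mono_left (nhdsWithin_le_nhds (s := Ioi (0:ℝ)))
      simpa using h2
    refine hg.congr' ?_
    filter_upwards [self_mem_nhdsWithin] with s hs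
    have hs0 : (0:ℝ) < s := hs
    show μ * (s * c - 1) = u ((1 - s) • p + s • x₁)
    simp only [u, PiLp.add_apply, PiLp.smul_apply, smul_eq_mul, hp0, hp1]
    have h0 : (1 - s) * (-1) + s * x₁ 0 + 1 = s * (x₁ 0 + 1) := by ring
    have h1 : (1 - s) * 0 + s * x₁ 1 = s * x₁ 1 := by ring
    rw [h0, h1, hc]
    field_simp
  · -- boundary value 0 elsewhere
    intro x₀ hx₀ hne x₁ hx₁
    have hA : 0 < x₀ 0 + 1 := sphere_pos hp0 hp1 hx₀ hne
    have hsq := sphere_sq hx₀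
    have hct : ContinuousAt (fun s : ℝ =>
        μ * ((((1-s) * x₀ 0 + s * x₁ 0 + 1)^2 + ((1-s) * x₀ 1 + s * x₁ 1)^2) /
          (2 * ((1-s) * x₀ 0 + s * x₁ 0 + 1)) - 1)) 0 := by
      apply ContinuousAt.mul continuousAt_const
      apply ContinuousAt.sub _ continuousAt_const
      apply ContinuousAt.div (by fun_prop) (by fun_prop)
      simp only []
      norm_num
      linarith
    have h2 := hct.tendsto.mono_left (nhdsWithin_le_nhds (s := Ioi (0:ℝ)))
    have hval : μ * ((((1-(0:ℝ)) * x₀ 0 + 0 * x₁ 0 + 1)^2 + ((1-(0:ℝ)) * x₀ 1 + 0 * x₁ 1)^2) /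
          (2 * ((1-(0:ℝ)) * x₀ 0 + 0 * x₁ 0 + 1)) - 1) = 0 := by
      have hnum : ((1-(0:ℝ)) * x₀ 0 + 0 * x₁ 0 + 1)^2 + ((1-(0:ℝ)) * x₀ 1 + 0 * x₁ 1)^2
          = 2 * ((1-(0:ℝ)) * x₀ 0 + 0 * x₁ 0 + 1) := by nlinarith
      rw [hnum, div_self (by norm_num; linarith)]
      ring
    rw [hval] at h2
    refine h2.congr fun s => ?_
    simp only [u, PiLp.add_apply, PiLp.smul_apply, smul_eq_mul]
  · -- chord is affine
    intro x hx hne s hs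
    have hA : 0 < x 0 + 1 := sphere_pos hp0 hp1 hx hne
    have hsq := sphere_sq hx
    obtain ⟨hs0, hs1⟩ := hs
    show μ * _ = _
    simp only [PiLp.add_apply, PiLp.smul_apply, smul_eq_mul, hp0, hp1]
    have h0 : (1 - s) * (-1) + s * x 0 + 1 = s * (x 0 + 1) := by ring
    have h1 : (1 - s) * 0 + s * x 1 = s * x 1 := by ring
    rw [h0, h1]
    have hd : (2 : ℝ) * (s * (x 0 + 1)) ≠ 0 := by positivity
    field_simp
    linear_combination μ * s * hsq
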